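/- Let P(z) = Σ_{j=0}^n A_j z^j be a matrix polynomial with square complex matrix coefficients, A_n invertible, having at least three nonzero coefficient matrices, and let k, ℓ be the smallest positive integers such that A_{n-k} ≠ 0 and A_{n-k-ℓ} ≠ 0. Let ‖·‖ be a submultiplicative matrix norm with ‖A_n^{-2}‖^{-1} = ‖A_n‖ ‖A_n^{-1}‖^{-1}, and assume A_n commutes with A_{n-k} and with A_{n-k-ℓ}. Define Q(z) = (A_n z^{k+ℓ} − A_{n-k} z^ℓ − A_{n-k-ℓ}) P(z). Then ρ[Q] ≤ ρ[P]. -/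

import Mathlib

theorem aux_compare (c x y : ℝ) (M' : ℕ) (q : ℕ → ℝ) (hc : 0 < c) (hx : 0 < x) (hy : 0 < y)
    (hq : ∀ j, 0 ≤ q j)
    (hxe : c * x ^ (M' + 1) = ∑ j ∈ Finset.range (M' + 1), q j * x ^ j)
    (hye : ∑ j ∈ Finset.range (M' + 1), q j * y ^ j ≤ c * y ^ (M' + 1)) : x ≤ y := by
  rcases le_total x y with h | hyx
  · exact h
  have key : ∀ j ∈ Finset.range (M' + 1), q j * x ^ j * y ^ M' ≤ q j * y ^ j * x ^ M' := by
    intro j hj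
    rw [Finset.mem_range, Nat.lt_succ_iff] at hj
    obtain ⟨t, rfl⟩ : ∃ t, M' = j + t := ⟨M' - j, by omega⟩
    have h1 : y ^ t ≤ x ^ t := pow_le_pow_left₀ hy.le hyx t
    have h2 : 0 ≤ q j * x ^ j * y ^ j :=
      mul_nonneg (mul_nonneg (hq j) (pow_nonneg hx.le j)) (pow_nonneg hy.le j)
    calc q j * x ^ j * y ^ (j + t) = q j * x ^ j * y ^ j * y ^ t := by rw [pow_add]; ring
      _ ≤ q j * x ^ j * y ^ j * x ^ t := by nlinarith
      _ = q j * y ^ j * x ^ (j + t) := by rw [pow_add]; ring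
  have h1 : c * x ^ (M' + 1) * y ^ M' ≤ c * y ^ (M' + 1) * x ^ M' := by
    rw [hxe, Finset.sum_mul]
    calc ∑ j ∈ Finset.range (M' + 1), q j * x ^ j * y ^ M'
        ≤ ∑ j ∈ Finset.range (M' + 1), q j * y ^ j * x ^ M' := Finset.sum_le_sum key
      _ ≤ c * y ^ (M' + 1) * x ^ M' := by
          rw [← Finset.sum_mul]
          exact mul_le_mul_of_nonneg_right hye (pow_nonneg hx.le _)
  have hpos : 0 < c * (x ^ M' * y ^ M') := by positivity
  refine le_of_mul_le_mul_right ?_ hpos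
  calc x * (c * (x ^ M' * y ^ M')) = c * x ^ (M' + 1) * y ^ M' := by rw [pow_succ]; ring
    _ ≤ c * y ^ (M' + 1) * x ^ M' := h1
    _ = y * (c * (x ^ M' * y ^ M')) := by rw [pow_succ]; ring

/-- Coefficients of the product of two matrix polynomials given by their
coefficient sequences (Cauchy product). -/
noncomputable def Qcoeff {m : ℕ} (T A : ℕ → Matrix (Fin m) (Fin m) ℂ) (j : ℕ) :
    Matrix (Fin m) (Fin m) ℂ :=
  ∑ i ∈ Finset.range (j + 1), T i * A (j - i)

/-- Coefficients of the multiplier `Aₙ z^{k+ℓ} - A_{n-k} z^ℓ - A_{n-k-ℓ}`. -/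
noncomputable def mult1 {m : ℕ} (A : ℕ → Matrix (Fin m) (Fin m) ℂ) (n k ℓ : ℕ) (i : ℕ) :
    Matrix (Fin m) (Fin m) ℂ :=
  if i = k + ℓ then A n else if i = ℓ then -A (n - k)
    else if i = 0 then -A (n - k - ℓ) else 0

theorem Qcoeff_mult1 {m : ℕ} (A : ℕ → Matrix (Fin m) (Fin m) ℂ) (n k ℓ : ℕ)
    (hk : 0 < k) (hℓ : 0 < ℓ) (j : ℕ) :
    Qcoeff (mult1 A n k ℓ) A j
      = (if k + ℓ ≤ j then A n * A (j - (k + ℓ)) else 0)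
        + (if ℓ ≤ j then -A (n - k) * A (j - ℓ) else 0)
        + -A (n - k - ℓ) * A j := by
  unfold Qcoeff
  have step : ∀ i ∈ Finset.range (j + 1), mult1 A n k ℓ i * A (j - i)
      = (if i = k + ℓ then A n * A (j - (k + ℓ)) else 0)
        + ((if i = ℓ then -A (n - k) * A (j - ℓ) else 0)
        + (if i = 0 then -A (n - k - ℓ) * A j else 0)) := by
    intro i _
    unfold mult1
    rcases eq_or_ne i (k + ℓ) with h1 | h1
    · subst h1
      rw [if_pos rfl, if_pos rfl, if_neg (by omega), if_neg (by omega)]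
      simp
    rcases eq_or_ne i ℓ with h2 | h2
    · subst h2
      rw [if_neg h1, if_neg h1, if_pos rfl, if_pos rfl, if_neg (by omega)]
      simp
    rcases eq_or_ne i 0 with h3 | h3
    · subst h3
      rw [if_neg h1, if_neg h1, if_neg h2, if_neg h2, if_pos rfl, if_pos rfl]
      simp
    · rw [if_neg h1, if_neg h1, if_neg h2, if_neg h2, if_neg h3, if_neg h3]
      simp
  rw [Finset.sum_congr rfl step, Finset.sum_add_distrib, Finset.sum_add_distrib,
    Finset.sum_ite_eq' (Finset.range (j + 1)) (k + ℓ),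
    Finset.sum_ite_eq' (Finset.range (j + 1)) ℓ,
    Finset.sum_ite_eq' (Finset.range (j + 1)) 0]
  simp only [Finset.mem_range, Nat.lt_succ_iff, Nat.zero_le, if_true, add_assoc]

set_option maxHeartbeats 1000000 in
/-- `ρ[(Aₙ z^{k+ℓ} - A_{n-k} z^ℓ - A_{n-k-ℓ}) P(z)] ≤ ρ[P]` under the norm and
commutation assumptions of Theorem 2.1. -/
theorem matrix_improved_cauchy_radius_Q1 {m : ℕ}
    (n : ℕ) (A : ℕ → Matrix (Fin m) (Fin m) ℂ)
    (hdeg : ∀ j, n < j → A j = 0) (hinv : IsUnit (A n))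
    (k ℓ : ℕ) (hk : 0 < k) (hℓ : 0 < ℓ) (hkl : k + ℓ ≤ n)
    (hknz : A (n - k) ≠ 0) (hkmin : ∀ j, 0 < j → j < k → A (n - j) = 0)
    (hlnz : A (n - k - ℓ) ≠ 0) (hlmin : ∀ j, 0 < j → j < ℓ → A (n - k - j) = 0)
    (N : Matrix (Fin m) (Fin m) ℂ → ℝ)
    (hN0 : ∀ M, N M = 0 ↔ M = 0)
    (hNsmul : ∀ (c : ℂ) M, N (c • M) = ‖c‖ * N M)
    (hNadd : ∀ M₁ M₂, N (M₁ + M₂) ≤ N M₁ + N M₂)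
    (hNmul : ∀ M₁ M₂, N (M₁ * M₂) ≤ N M₁ * N M₂)
    (hNsq : (N ((A n)⁻¹ * (A n)⁻¹))⁻¹ = N (A n) * (N (A n)⁻¹)⁻¹)
    (hcomm1 : A n * A (n - k) = A (n - k) * A n)
    (hcomm2 : A n * A (n - k - ℓ) = A (n - k - ℓ) * A n)
    (x y : ℝ) (hx : 0 < x) (hy : 0 < y)
    (hxroot : (N ((A n * A n))⁻¹)⁻¹ * x ^ (n + k + ℓ)
      = ∑ j ∈ Finset.range (n + k + ℓ), N (Qcoeff (mult1 A n k ℓ) A j) * x ^ j)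
    (hyroot : (N (A n)⁻¹)⁻¹ * y ^ n = ∑ j ∈ Finset.range n, N (A j) * y ^ j) :
    x ≤ y := by
  -- the case of 0×0 matrices is vacuous
  rcases Nat.eq_zero_or_pos m with hm | hm
  · exfalso
    apply hknz
    subst hm
    ext i j
    exact i.elim0
  -- basic facts about the norm
  have hNzero : N 0 = 0 := (hN0 0).mpr rfl
  have hNneg : ∀ X, N (-X) = N X := by
    intro X
    have h := hNsmul (-1) X
    simpa using h
  have hNnonneg : ∀ X, 0 ≤ N X := by
    intro X
    have h := hNadd X (-X)
    rw [add_neg_cancel, hNzero, hNneg] at h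
    linarith
  have h1ne : (1 : Matrix (Fin m) (Fin m) ℂ) ≠ 0 := by
    intro h
    have := congrFun (congrFun h ⟨0, hm⟩) ⟨0, hm⟩
    simp [Matrix.one_apply] at this
  have hdet : IsUnit (A n).det := (Matrix.isUnit_iff_isUnit_det _).mp hinv
  have hAinv : A n * (A n)⁻¹ = 1 := Matrix.mul_nonsing_inv _ hdet
  have hAn_ne : A n ≠ 0 := by
    intro h
    rw [h, Matrix.zero_mul] at hAinv
    exact h1ne hAinv.symm
  have hInv_ne : (A n)⁻¹ ≠ 0 := by
    intro h
    rw [h, Matrix.mul_zero] at hAinv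
    exact h1ne hAinv.symm
  have ha : 0 < N (A n) :=
    (hNnonneg _).lt_of_ne (fun h => hAn_ne ((hN0 _).mp h.symm)) 
  have hNinv_pos : 0 < N ((A n)⁻¹) :=
    (hNnonneg _).lt_of_ne (fun h => hInv_ne ((hN0 _).mp h.symm))
  have hbP : 0 < (N ((A n)⁻¹))⁻¹ := inv_pos.mpr hNinv_pos
  have hone : (1 : ℝ) ≤ N 1 := by
    have h := hNmul 1 1
    rw [one_mul] at h
    have h1 : 0 < N 1 := (hNnonneg _).lt_of_ne (fun h => h1ne ((hN0 _).mp h.symm))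
    nlinarith
  have hbPa : (N ((A n)⁻¹))⁻¹ ≤ N (A n) := by
    have h := hNmul (A n) ((A n)⁻¹)
    rw [hAinv] at h
    have h2 : 1 ≤ N (A n) * N ((A n)⁻¹) := le_trans hone h
    rw [inv_eq_one_div, div_le_iff₀ hNinv_pos]
    linarith
  -- the three relevant special values of Qcoeff
  have hqn : N (Qcoeff (mult1 A n k ℓ) A n) ≤ N (A (n - k)) * N (A (n - ℓ)) := by
    have e : Qcoeff (mult1 A n k ℓ) A n = -(A (n - k) * A (n - ℓ)) := by
      rw [Qcoeff_mult1 A n k ℓ hk hℓ, if_pos hkl, if_pos (by omega : ℓ ≤ n),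
        ← Nat.sub_sub, hcomm2]
      simp only [neg_mul]
      abel
    rw [e, hNneg]
    exact hNmul _ _
  have hqnl : N (Qcoeff (mult1 A n k ℓ) A (n + ℓ)) = 0 := by
    have e : Qcoeff (mult1 A n k ℓ) A (n + ℓ) = 0 := by
      rw [Qcoeff_mult1 A n k ℓ hk hℓ, if_pos (by omega : k + ℓ ≤ n + ℓ),
        if_pos (by omega : ℓ ≤ n + ℓ),
        show n + ℓ - (k + ℓ) = n - k from by omega,
        show n + ℓ - ℓ = n from by omega,
        hdeg (n + ℓ) (by omega), hcomm1]
      simp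
    rw [e, hNzero]
  have hqB : ∀ j, N (Qcoeff (mult1 A n k ℓ) A j)
      ≤ (if k + ℓ ≤ j then N (A n) * N (A (j - (k + ℓ))) else 0)
        + (if ℓ ≤ j then N (A (n - k)) * N (A (j - ℓ)) else 0)
        + N (A (n - k - ℓ)) * N (A j) := by
    intro j
    rw [Qcoeff_mult1 A n k ℓ hk hℓ]
    refine le_trans (hNadd _ _) (add_le_add (le_trans (hNadd _ _) (add_le_add ?_ ?_)) ?_)
    · split_ifs with h
      · exact hNmul _ _
      · rw [hNzero]
    · split_ifs with h
      · calc N (-A (n - k) * A (j - ℓ)) = N (A (n - k) * A (j - ℓ)) := by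
              rw [neg_mul, hNneg]
          _ ≤ N (A (n - k)) * N (A (j - ℓ)) := hNmul _ _
      · rw [hNzero]
    · calc N (-A (n - k - ℓ) * A j) = N (A (n - k - ℓ) * A j) := by rw [neg_mul, hNneg]
        _ ≤ N (A (n - k - ℓ)) * N (A j) := hNmul _ _
  -- the main estimate: the Q-polynomial evaluated at y
  have hpt : ∀ j ∈ Finset.range (n + k + ℓ), N (Qcoeff (mult1 A n k ℓ) A j) * y ^ j
      ≤ (if j = n then N (A (n - k)) * N (A (n - ℓ)) * y ^ n else
          if j = n + ℓ then 0 else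
          ((if k + ℓ ≤ j then N (A n) * N (A (j - (k + ℓ))) else 0)
            + (if ℓ ≤ j then N (A (n - k)) * N (A (j - ℓ)) else 0)
            + N (A (n - k - ℓ)) * N (A j)) * y ^ j) := by
    intro j _
    by_cases hjn : j = n
    · subst hjn
      rw [if_pos rfl]
      exact mul_le_mul_of_nonneg_right hqn (pow_nonneg hy.le _)
    by_cases hjl : j = n + ℓ
    · subst hjl
      rw [if_neg (by omega), if_pos rfl, hqnl, zero_mul]
    · simp only [if_neg hjn, if_neg hjl]
      exact mul_le_mul_of_nonneg_right (hqB j) (pow_nonneg hy.le j)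
  have hptw : ∀ j ∈ Finset.range (n + k + ℓ),
      ((if k + ℓ ≤ j then N (A n) * N (A (j - (k + ℓ))) else 0)
        + (if ℓ ≤ j then N (A (n - k)) * N (A (j - ℓ)) else 0)
        + N (A (n - k - ℓ)) * N (A j)) * y ^ j
      = (if j = n then N (A (n - k)) * N (A (n - ℓ)) * y ^ n else
          if j = n + ℓ then 0 else
          ((if k + ℓ ≤ j then N (A n) * N (A (j - (k + ℓ))) else 0)
            + (if ℓ ≤ j then N (A (n - k)) * N (A (j - ℓ)) else 0)
            + N (A (n - k - ℓ)) * N (A j)) * y ^ j)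
        + ((if j = n then 2 * (N (A n) * N (A (n - k - ℓ))) * y ^ n else 0)
        + (if j = n + ℓ then 2 * (N (A n) * N (A (n - k))) * y ^ (n + ℓ) else 0)) := by
    intro j _
    by_cases hjn : j = n
    · subst hjn
      rw [← Nat.sub_sub]
      split_ifs <;> first | (exfalso; omega) | ring1
    by_cases hjl : j = n + ℓ
    · subst hjl
      rw [show n + ℓ - (k + ℓ) = n - k from by omega, show n + ℓ - ℓ = n from by omega,
        hdeg (n + ℓ) (by omega), hNzero]
      split_ifs <;> first | (exfalso; omega) | ring1
    · simp only [if_neg hjn, if_neg hjl]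
      ring
  -- evaluate the three pieces of the bound sum
  have hP1 : ∑ j ∈ Finset.range (n + k + ℓ),
      (if k + ℓ ≤ j then N (A n) * N (A (j - (k + ℓ))) else 0) * y ^ j
      = N (A n) * y ^ (k + ℓ) * ((N ((A n)⁻¹))⁻¹ * y ^ n) := by
    rw [show n + k + ℓ = (k + ℓ) + n from by ring, Finset.sum_range_add]
    have h1 : ∑ j ∈ Finset.range (k + ℓ),
        (if k + ℓ ≤ j then N (A n) * N (A (j - (k + ℓ))) else 0) * y ^ j = 0 := by
      refine Finset.sum_eq_zero fun j hj => ?_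
      rw [Finset.mem_range] at hj
      rw [if_neg (by omega), zero_mul]
    have h2 : ∀ i ∈ Finset.range n,
        (if k + ℓ ≤ k + ℓ + i then N (A n) * N (A (k + ℓ + i - (k + ℓ))) else 0) * y ^ (k + ℓ + i)
        = N (A n) * y ^ (k + ℓ) * (N (A i) * y ^ i) := by
      intro i _
      rw [if_pos (by omega), show k + ℓ + i - (k + ℓ) = i from by omega, pow_add]
      ring
    rw [h1, zero_add, Finset.sum_congr rfl h2, ← Finset.mul_sum, ← hyroot]
  have hnk : ∑ i ∈ Finset.range (n + k), N (A i) * y ^ i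
      = (N ((A n)⁻¹))⁻¹ * y ^ n + N (A n) * y ^ n := by
    rw [Finset.sum_range_add, ← hyroot]
    congr 1
    rw [Finset.sum_eq_single_of_mem 0 (Finset.mem_range.mpr hk)]
    · simp
    · intro i _ hne
      rw [hdeg (n + i) (by omega), hNzero, zero_mul]
  have hP2 : ∑ j ∈ Finset.range (n + k + ℓ),
      (if ℓ ≤ j then N (A (n - k)) * N (A (j - ℓ)) else 0) * y ^ j
      = N (A (n - k)) * y ^ ℓ * ((N ((A n)⁻¹))⁻¹ * y ^ n + N (A n) * y ^ n) := by
    rw [show n + k + ℓ = ℓ + (n + k) from by ring, Finset.sum_range_add]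
    have h1 : ∑ j ∈ Finset.range ℓ,
        (if ℓ ≤ j then N (A (n - k)) * N (A (j - ℓ)) else 0) * y ^ j = 0 := by
      refine Finset.sum_eq_zero fun j hj => ?_
      rw [Finset.mem_range] at hj
      rw [if_neg (by omega), zero_mul]
    have h2 : ∀ i ∈ Finset.range (n + k),
        (if ℓ ≤ ℓ + i then N (A (n - k)) * N (A (ℓ + i - ℓ)) else 0) * y ^ (ℓ + i)
        = N (A (n - k)) * y ^ ℓ * (N (A i) * y ^ i) := by
      intro i _
      rw [if_pos (by omega), show ℓ + i - ℓ = i from by omega, pow_add]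
      ring
    rw [h1, zero_add, Finset.sum_congr rfl h2, ← Finset.mul_sum, hnk]
  have hP3 : ∑ j ∈ Finset.range (n + k + ℓ), (N (A (n - k - ℓ)) * N (A j)) * y ^ j
      = N (A (n - k - ℓ)) * ((N ((A n)⁻¹))⁻¹ * y ^ n + N (A n) * y ^ n) := by
    have h2 : ∀ j ∈ Finset.range (n + k + ℓ),
        (N (A (n - k - ℓ)) * N (A j)) * y ^ j = N (A (n - k - ℓ)) * (N (A j) * y ^ j) := by
      intro j _
      ring
    rw [Finset.sum_congr rfl h2, ← Finset.mul_sum,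
      show n + k + ℓ = n + (k + ℓ) from by ring, Finset.sum_range_add, ← hyroot]
    congr 2
    rw [Finset.sum_eq_single_of_mem 0 (Finset.mem_range.mpr (by omega : 0 < k + ℓ))]
    · simp
    · intro i _ hne
      rw [hdeg (n + i) (by omega), hNzero, zero_mul]
  -- assemble the bound sum
  have hBsum : ∑ j ∈ Finset.range (n + k + ℓ),
      ((if k + ℓ ≤ j then N (A n) * N (A (j - (k + ℓ))) else 0)
        + (if ℓ ≤ j then N (A (n - k)) * N (A (j - ℓ)) else 0)
        + N (A (n - k - ℓ)) * N (A j)) * y ^ j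
      = N (A n) * y ^ (k + ℓ) * ((N ((A n)⁻¹))⁻¹ * y ^ n)
        + (N (A (n - k)) * y ^ ℓ * ((N ((A n)⁻¹))⁻¹ * y ^ n + N (A n) * y ^ n)
        + N (A (n - k - ℓ)) * ((N ((A n)⁻¹))⁻¹ * y ^ n + N (A n) * y ^ n)) := by
    have h : ∀ j ∈ Finset.range (n + k + ℓ),
        ((if k + ℓ ≤ j then N (A n) * N (A (j - (k + ℓ))) else 0)
          + (if ℓ ≤ j then N (A (n - k)) * N (A (j - ℓ)) else 0)
          + N (A (n - k - ℓ)) * N (A j)) * y ^ j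
        = (if k + ℓ ≤ j then N (A n) * N (A (j - (k + ℓ))) else 0) * y ^ j
          + ((if ℓ ≤ j then N (A (n - k)) * N (A (j - ℓ)) else 0) * y ^ j
          + (N (A (n - k - ℓ)) * N (A j)) * y ^ j) := by
      intro j _
      ring
    rw [Finset.sum_congr rfl h, Finset.sum_add_distrib, Finset.sum_add_distrib, hP1, hP2, hP3]
  have hsplit : ∑ j ∈ Finset.range (n + k + ℓ),
      ((if k + ℓ ≤ j then N (A n) * N (A (j - (k + ℓ))) else 0)
        + (if ℓ ≤ j then N (A (n - k)) * N (A (j - ℓ)) else 0)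
        + N (A (n - k - ℓ)) * N (A j)) * y ^ j
      = (∑ j ∈ Finset.range (n + k + ℓ),
          (if j = n then N (A (n - k)) * N (A (n - ℓ)) * y ^ n else
            if j = n + ℓ then 0 else
            ((if k + ℓ ≤ j then N (A n) * N (A (j - (k + ℓ))) else 0)
              + (if ℓ ≤ j then N (A (n - k)) * N (A (j - ℓ)) else 0)
              + N (A (n - k - ℓ)) * N (A j)) * y ^ j))
        + (2 * (N (A n) * N (A (n - k - ℓ))) * y ^ n
        + 2 * (N (A n) * N (A (n - k))) * y ^ (n + ℓ)) := by
    rw [Finset.sum_congr rfl hptw, Finset.sum_add_distrib, Finset.sum_add_distrib,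
      Finset.sum_ite_eq' (Finset.range (n + k + ℓ)) n,
      Finset.sum_ite_eq' (Finset.range (n + k + ℓ)) (n + ℓ),
      if_pos (Finset.mem_range.mpr (by omega : n < n + k + ℓ)),
      if_pos (Finset.mem_range.mpr (by omega : n + ℓ < n + k + ℓ))]
  have hsum : ∑ j ∈ Finset.range (n + k + ℓ), N (Qcoeff (mult1 A n k ℓ) A j) * y ^ j
      ≤ N (A n) * (N ((A n)⁻¹))⁻¹ * y ^ (n + k + ℓ) := by
    have h0 := Finset.sum_le_sum hpt
    have e1 : y ^ (n + ℓ) = y ^ n * y ^ ℓ := pow_add y n ℓ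
    have e2 : y ^ (n + k + ℓ) = y ^ n * y ^ (k + ℓ) := by
      rw [show n + k + ℓ = n + (k + ℓ) from by ring, pow_add]
    have hb : 0 ≤ N (A (n - k)) := hNnonneg _
    have hd : 0 ≤ N (A (n - k - ℓ)) := hNnonneg _
    have hu : (0:ℝ) ≤ y ^ n := pow_nonneg hy.le n
    have hv : (0:ℝ) ≤ y ^ ℓ := pow_nonneg hy.le ℓ
    have hint1 : 0 ≤ (N (A n) - (N ((A n)⁻¹))⁻¹) * N (A (n - k)) * (y ^ n * y ^ ℓ) :=
      mul_nonneg (mul_nonneg (sub_nonneg.mpr hbPa) hb) (mul_nonneg hu hv)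
    have hint2 : 0 ≤ (N (A n) - (N ((A n)⁻¹))⁻¹) * N (A (n - k - ℓ)) * y ^ n :=
      mul_nonneg (mul_nonneg (sub_nonneg.mpr hbPa) hd) hu
    rw [e1] at hsplit
    rw [e2]
    linarith [h0, hsplit, hBsum, hint1, hint2]
  -- conclude via the comparison lemma
  have hcc : (N ((A n * A n)⁻¹))⁻¹ = N (A n) * (N ((A n)⁻¹))⁻¹ := by
    rw [Matrix.mul_inv_rev]
    exact hNsq
  rw [hcc] at hxroot
  obtain ⟨M', hM'⟩ : ∃ M', n + k + ℓ = M' + 1 := ⟨n + k + ℓ - 1, by omega⟩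
  rw [hM'] at hxroot hsum
  exact aux_compare _ x y M' _ (mul_pos ha hbP) hx hy (fun j => hNnonneg _) hxroot hsum
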